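/- Let A be a commutative ring of prime characteristic p, let f = 1 + ∑_{i≥1} aᵢ Xⁱ ∈ A[[X]], and let n be a positive integer not divisible by p. Then for every i ≥ 1, the coefficient of Xⁱ in fⁿ equals n·aᵢ plus an element of the subring of A generated by a₁, …, a_{i-1}. Consequently the subring of A generated by the coefficients of fⁿ equals the subring generated by the coefficients of f. -/

import Mathlib

private lemma key_coeff {A : Type*} [CommRing A] (f : PowerSeries A)
    (hf : PowerSeries.constantCoeff f = 1) (n : ℕ) :
    ∀ i : ℕ, 1 ≤ i →
      ∃ c ∈ Subring.closure {x : A | ∃ j, 1 ≤ j ∧ j < i ∧ x = PowerSeries.coeff j f},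
        PowerSeries.coeff i (f ^ n) = n * PowerSeries.coeff i f + c := by
  induction n with
  | zero =>
    intro i hi
    refine ⟨0, Subring.zero_mem _, ?_⟩
    have : i ≠ 0 := Nat.one_le_iff_ne_zero.mp hi
    simp [PowerSeries.coeff_one, this]
  | succ n ih =>
    intro i hi
    obtain ⟨m, rfl⟩ : ∃ m, i = m + 1 := ⟨i - 1, (Nat.succ_pred_eq_of_pos hi).symm⟩
    set C := Subring.closure {x : A | ∃ j, 1 ≤ j ∧ j < m + 1 ∧ x = PowerSeries.coeff j f}
      with hC
    have hcz : PowerSeries.coeff 0 (f ^ n) = 1 := by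
      rw [PowerSeries.coeff_zero_eq_constantCoeff, map_pow, hf, one_pow]
    have hmem : ∀ j, 1 ≤ j → j < m + 1 → PowerSeries.coeff j f ∈ C :=
      fun j h1 h2 => Subring.subset_closure ⟨j, h1, h2, rfl⟩
    have hpow : ∀ j, 1 ≤ j → j < m + 1 → PowerSeries.coeff j (f ^ n) ∈ C := by
      intro j h1 h2
      obtain ⟨c, hc, hcoef⟩ := ih j h1
      have hcC : c ∈ C := by
        refine Subring.closure_mono ?_ hc
        rintro x ⟨k, hk1, hk2, rfl⟩
        exact ⟨k, hk1, hk2.trans h2, rfl⟩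
      rw [hcoef]
      exact Subring.add_mem _ (Subring.mul_mem _ (natCast_mem _ n) (hmem j h1 h2)) hcC
    obtain ⟨c, hc, hcoef⟩ := ih (m + 1) hi
    rw [pow_succ, PowerSeries.coeff_mul,
      Finset.Nat.sum_antidiagonal_eq_sum_range_succ_mk, Finset.sum_range_succ,
      Finset.sum_range_succ']
    have hmid : ∑ j ∈ Finset.range m,
        PowerSeries.coeff (j + 1) (f ^ n) * PowerSeries.coeff (m + 1 - (j + 1)) f ∈ C := by
      refine Subring.sum_mem _ ?_
      intro j hj
      have hj' := Finset.mem_range.mp hj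
      exact Subring.mul_mem _ (hpow (j + 1) (Nat.le_add_left 1 j) (by omega))
        (hmem _ (by omega) (by omega))
    refine ⟨c + ∑ j ∈ Finset.range m,
        PowerSeries.coeff (j + 1) (f ^ n) * PowerSeries.coeff (m + 1 - (j + 1)) f,
      Subring.add_mem _ hc hmid, ?_⟩
    rw [hcz, hcoef]
    simp only [Nat.sub_zero, Nat.sub_self, PowerSeries.coeff_zero_eq_constantCoeff, hf]
    push_cast
    ring

/-- Let `A` have prime characteristic `p`, let `f = 1 + ∑_{i≥1} aᵢ Xⁱ`, and let `n > 0`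
with `p ∤ n`. Then the coefficient of `Xⁱ` in `fⁿ` is `n·aᵢ` plus an element of the
subring generated by `a₁, …, a_{i-1}`; consequently the coefficients of `fⁿ` generate
the same subring as the coefficients of `f`. -/
theorem stmt3 (p : ℕ) (hp : p.Prime) (A : Type*) [CommRing A] [CharP A p]
    (f : PowerSeries A) (hf : PowerSeries.constantCoeff f = 1)
    (n : ℕ) (hn : 0 < n) (hpn : ¬ p ∣ n) :
    (∀ i : ℕ, 1 ≤ i →
      ∃ c ∈ Subring.closure {x : A | ∃ j, 1 ≤ j ∧ j < i ∧ x = PowerSeries.coeff j f},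
        PowerSeries.coeff i (f ^ n) = n * PowerSeries.coeff i f + c) ∧
    Subring.closure {x : A | ∃ i, 1 ≤ i ∧ x = PowerSeries.coeff i (f ^ n)} =
      Subring.closure {x : A | ∃ i, 1 ≤ i ∧ x = PowerSeries.coeff i f} := by
  have hkey := key_coeff f hf n
  refine ⟨hkey, ?_⟩
  obtain ⟨b, hu⟩ : ∃ b : ℤ, (b : A) * (n : A) = 1 := by
    have hcop : Nat.Coprime p n := (Nat.Prime.coprime_iff_not_dvd hp).mpr hpn
    obtain ⟨a, b, hab⟩ := Nat.isCoprime_iff_coprime.mpr hcop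
    refine ⟨b, ?_⟩
    have := congrArg (fun z : ℤ => (z : A)) hab
    push_cast at this
    rw [CharP.cast_eq_zero A p] at this
    linear_combination this
  set Sn := Subring.closure {x : A | ∃ i, 1 ≤ i ∧ x = PowerSeries.coeff i (f ^ n)} with hSn
  set S := Subring.closure {x : A | ∃ i, 1 ≤ i ∧ x = PowerSeries.coeff i f} with hS
  have hmemS : ∀ i, 1 ≤ i → PowerSeries.coeff i f ∈ S :=
    fun i hi => Subring.subset_closure ⟨i, hi, rfl⟩
  have hle : Sn ≤ S := by
    rw [hSn, Subring.closure_le]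
    rintro x ⟨i, hi, rfl⟩
    obtain ⟨c, hc, hcoef⟩ := hkey i hi
    have hcS : c ∈ S := by
      refine (Subring.closure_le.mpr ?_) hc
      rintro y ⟨j, hj1, _, rfl⟩
      exact hmemS j hj1
    rw [hcoef]
    exact Subring.add_mem _ (Subring.mul_mem _ (natCast_mem _ n) (hmemS i hi)) hcS
  have hge : ∀ i, 1 ≤ i → PowerSeries.coeff i f ∈ Sn := by
    intro i
    induction i using Nat.strong_induction_on with
    | _ i ih =>
      intro hi
      obtain ⟨c, hc, hcoef⟩ := hkey i hi
      have hcSn : c ∈ Sn := by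
        refine (Subring.closure_le.mpr ?_) hc
        rintro y ⟨j, hj1, hj2, rfl⟩
        exact ih j hj2 hj1
      have hx : PowerSeries.coeff i (f ^ n) ∈ Sn := Subring.subset_closure ⟨i, hi, rfl⟩
      have heq : PowerSeries.coeff i f =
          (b : A) * (PowerSeries.coeff i (f ^ n) - c) := by
        rw [hcoef]
        linear_combination (-(PowerSeries.coeff i f)) * hu
      rw [heq]
      exact Subring.mul_mem _ (intCast_mem _ b) (Subring.sub_mem _ hx hcSn)
  exact le_antisymm hle (Subring.closure_le.mpr (by rintro x ⟨i, hi, rfl⟩; exact hge i hi))
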